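/- Let W be a constant with w(x) ≤ W for all x∈ℝ, and let a(T) and ā(T) be the optimal terminal asset values for horizon T for the problems with wage distribution w(x) and with constant wage W, respectively, all other parameters being identical. Then a(T) ≤ ā(T). -/

import Mathlib

open MeasureTheory Set Filter

/-- Spatial state: `x(t) = x₀ + ∫₀ᵗ z(s) ds`. -/
noncomputable def stateX (x₀ : ℝ) (z : ℝ → ℝ) (t : ℝ) : ℝ :=
  x₀ + ∫ s in (0:ℝ)..t, z s

/-- Asset state:
`a(t) = e^{rt} (a₀ + ∫₀ᵗ (w(x(s)) - p c(s) - ξ z(s)²) e^{-rs} ds)`. -/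
noncomputable def stateA (r p ξ a₀ x₀ : ℝ) (w : ℝ → ℝ) (c z : ℝ → ℝ) (t : ℝ) : ℝ :=
  Real.exp (r * t) *
    (a₀ + ∫ s in (0:ℝ)..t,
      (w (stateX x₀ z s) - p * c s - ξ * (z s) ^ 2) * Real.exp (-(r * s)))

/-- The objective functional `J(c,z)`. -/
noncomputable def obj (ρ r η ξ p θ T a₀ x₀ : ℝ) (w : ℝ → ℝ) (c z : ℝ → ℝ) : ℝ :=
  (∫ t in (0:ℝ)..T, Real.exp (-(ρ * t)) * ((c t) ^ (1 - θ) / (1 - θ) - η * (z t) ^ 2)) +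
    Real.exp (-(ρ * T)) * (stateA r p ξ a₀ x₀ w c z T) ^ (1 - θ) / (1 - θ)

/-- `sup_x |w(x)|`. -/
noncomputable def wSup (w : ℝ → ℝ) : ℝ := ⨆ x : ℝ, |w x|

/-- `sup_x |w'(x)|`. -/
noncomputable def wDerivSup (w : ℝ → ℝ) : ℝ := ⨆ x : ℝ, |deriv w x|

/-- Standing assumptions on the wage distribution `w`. -/
def WageAssumptions (w : ℝ → ℝ) : Prop :=
  ContDiff ℝ 2 w ∧ (∃ M : ℝ, ∀ x : ℝ, |w x| ≤ M) ∧
    (∀ x ∈ Set.Ioo (0:ℝ) 1, 0 < w x) ∧ (∀ x : ℝ, x ∉ Set.Icc (0:ℝ) 1 → w x < 0) ∧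
    (∀ x : ℝ, x ≤ 0 → 0 < deriv w x) ∧ (∀ x : ℝ, 1 ≤ x → deriv w x < 0)

/-- Constraint on the consumption cap `C`:
`C^θ > max(1, μ^{1/θ}) (a₀ + T sup|w|)/(p (1-e^{-rT})/r)`, where
`μ = max_{t,t₀ ∈ [0,T]} e^{(r-ρ)(t-t₀)} = e^{|r-ρ| T}`. -/
def CapC (ρ r p θ T a₀ C : ℝ) (w : ℝ → ℝ) : Prop :=
  C ^ θ > max 1 (Real.exp (|r - ρ| * T) ^ (1 / θ)) *
    ((a₀ + T * wSup w) / (p * (1 - Real.exp (-(r * T))) / r))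

/-- Constraint on the relocation-speed cap `Z`. -/
def CapZ (r ξ T Z : ℝ) (w : ℝ → ℝ) : Prop :=
  Z > T * wDerivSup w * Real.exp (r * T) / (2 * ξ)

/-- A control pair: measurable controls satisfying the pointwise caps on `[0,T]`. -/
def ControlPair (T C Z : ℝ) (c z : ℝ → ℝ) : Prop :=
  Measurable c ∧ Measurable z ∧
    (∀ t ∈ Set.Icc (0:ℝ) T, c t ∈ Set.Icc (0:ℝ) C) ∧
    (∀ t ∈ Set.Icc (0:ℝ) T, |z t| ≤ Z)

/-- Admissibility: a control pair with nonnegative terminal assets. -/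
def Admissible (r p ξ T a₀ x₀ C Z : ℝ) (w : ℝ → ℝ) (c z : ℝ → ℝ) : Prop :=
  ControlPair T C Z c z ∧ 0 ≤ stateA r p ξ a₀ x₀ w c z T

/-- Optimality: admissible and maximizing `J` over all admissible pairs. -/
def Optimal (ρ r η ξ p θ T a₀ x₀ C Z : ℝ) (w : ℝ → ℝ) (c z : ℝ → ℝ) : Prop :=
  Admissible r p ξ T a₀ x₀ C Z w c z ∧
    ∀ c' z' : ℝ → ℝ, Admissible r p ξ T a₀ x₀ C Z w c' z' →
      obj ρ r η ξ p θ T a₀ x₀ w c' z' ≤ obj ρ r η ξ p θ T a₀ x₀ w c z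

/-- Admissibility without control caps (long-horizon analysis):
measurable nonnegative consumption, measurable relocation speed,
nonnegative terminal assets. -/
def Admissible' (r p ξ T a₀ x₀ : ℝ) (w : ℝ → ℝ) (c z : ℝ → ℝ) : Prop :=
  Measurable c ∧ Measurable z ∧ (∀ t ∈ Set.Icc (0:ℝ) T, 0 ≤ c t) ∧
    0 ≤ stateA r p ξ a₀ x₀ w c z T

/-- Optimality for the problem without control caps. -/
def Optimal' (ρ r η ξ p θ T a₀ x₀ : ℝ) (w : ℝ → ℝ) (c z : ℝ → ℝ) : Prop :=
  Admissible' r p ξ T a₀ x₀ w c z ∧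
    ∀ c' z' : ℝ → ℝ, Admissible' r p ξ T a₀ x₀ w c' z' →
      obj ρ r η ξ p θ T a₀ x₀ w c' z' ≤ obj ρ r η ξ p θ T a₀ x₀ w c z


/-- Interval integrability transfers along functions equal on `Icc a b`. -/
lemma intervalIntegrable_congr_Icc {f g : ℝ → ℝ} {a b : ℝ} (hab : a ≤ b)
    (h : IntervalIntegrable f MeasureTheory.volume a b) (heq : Set.EqOn f g (Set.Icc a b)) :
    IntervalIntegrable g MeasureTheory.volume a b := by
  rw [intervalIntegrable_iff_integrableOn_Ioc_of_le hab] at h ⊢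
  exact h.congr_fun (fun x hx => heq (Set.Ioc_subset_Icc_self hx)) measurableSet_Ioc

set_option maxHeartbeats 2000000 in
/-- Proposition: if `w(x) ≤ W` for all `x`, and `a(T)`, `ā(T)` are the optimal
terminal asset values for the problems with wage `w` and constant wage `W`
respectively (all other parameters identical), then `a(T) ≤ ā(T)`.
Both optimal consumptions obey the rule `c(t) = p^{-1/θ} e^{((ρ-r)/θ)(T-t)} ·
(terminal assets)`, and in the constant-wage problem `z̄ ≡ 0`. -/
theorem terminal_assets_le_of_wage_le_const
    (ρ r η ξ p θ T a₀ x₀ W : ℝ) (w : ℝ → ℝ)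
    (hρ : 0 < ρ) (hr : 0 < r) (hη : 0 < η) (hξ : 0 < ξ) (hp : 0 < p) (hT : 0 < T)
    (hθ : θ ∈ Set.Ioo (0:ℝ) 1) (hw : WageAssumptions w)
    (ha₀ : 0 < a₀) (hx₀ : x₀ ∈ Set.Ioo (0:ℝ) 1)
    (hwW : ∀ x : ℝ, w x ≤ W)
    (c z cbar zbar : ℝ → ℝ)
    (hopt : Optimal' ρ r η ξ p θ T a₀ x₀ w c z)
    (hoptbar : Optimal' ρ r η ξ p θ T a₀ x₀ (fun _ => W) cbar zbar)
    (hc : ∀ t ∈ Set.Icc (0:ℝ) T,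
      c t = p ^ (-(1 / θ)) * Real.exp (((ρ - r) / θ) * (T - t)) *
        stateA r p ξ a₀ x₀ w c z T)
    (hcbar : ∀ t ∈ Set.Icc (0:ℝ) T,
      cbar t = p ^ (-(1 / θ)) * Real.exp (((ρ - r) / θ) * (T - t)) *
        stateA r p ξ a₀ x₀ (fun _ => W) cbar zbar T)
    (hzbar : ∀ t ∈ Set.Icc (0:ℝ) T, zbar t = 0) :
    stateA r p ξ a₀ x₀ w c z T ≤
      stateA r p ξ a₀ x₀ (fun _ => W) cbar zbar T := by
  obtain ⟨hθ0, hθ1⟩ := hθ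
  have h0T : (0:ℝ) ≤ T := hT.le
  have hicc : Set.uIcc (0:ℝ) T = Set.Icc 0 T := Set.uIcc_of_le h0T
  set Ψ : ℝ → ℝ := fun t => p ^ (-(1/θ)) * Real.exp (((ρ - r)/θ) * (T - t)) with hΨdef
  have hΨpos : ∀ t, 0 < Ψ t := fun t =>
    mul_pos (Real.rpow_pos_of_pos hp _) (Real.exp_pos _)
  have hΨcont : Continuous Ψ := by
    apply Continuous.mul continuous_const
    exact Real.continuous_exp.comp (by fun_prop)
  set A := stateA r p ξ a₀ x₀ w c z T with hAdef
  set B := stateA r p ξ a₀ x₀ (fun _ => W) cbar zbar T with hBdef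
  set K : ℝ := ∫ s in (0:ℝ)..T, p * Ψ s * Real.exp (-(r*s)) with hKdef
  set WI : ℝ := ∫ s in (0:ℝ)..T, W * Real.exp (-(r*s)) with hWIdef
  have hKcont : Continuous fun s => p * Ψ s * Real.exp (-(r*s)) :=
    (continuous_const.mul hΨcont).mul (Real.continuous_exp.comp (by fun_prop))
  have hWIcont : Continuous fun s : ℝ => W * Real.exp (-(r*s)) :=
    continuous_const.mul (Real.continuous_exp.comp (by fun_prop))
  have hKnn : 0 ≤ K :=
    intervalIntegral.integral_nonneg h0T
      (fun s _ => le_of_lt (mul_pos (mul_pos hp (hΨpos s)) (Real.exp_pos _)))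
  have hE : 0 < Real.exp (r*T) := Real.exp_pos _
  have hden : 0 < 1 + Real.exp (r*T) * K :=
    add_pos_of_pos_of_nonneg one_pos (mul_nonneg hE.le hKnn)
  -- the equation for B
  have hBeq : B * (1 + Real.exp (r*T) * K) = Real.exp (r*T) * (a₀ + WI) := by
    have h1 : IntervalIntegrable (fun s : ℝ => W * Real.exp (-(r*s)))
        MeasureTheory.volume 0 T := hWIcont.intervalIntegrable _ _
    have h2 : IntervalIntegrable (fun s => B * (p * Ψ s * Real.exp (-(r*s))))
        MeasureTheory.volume 0 T := (continuous_const.mul hKcont).intervalIntegrable _ _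
    have hint : (∫ s in (0:ℝ)..T,
        ((fun _ => W) (stateX x₀ zbar s) - p * cbar s - ξ * (zbar s)^2) * Real.exp (-(r*s)))
        = WI - B * K := by
      rw [intervalIntegral.integral_congr
        (g := fun s => W * Real.exp (-(r*s)) - B * (p * Ψ s * Real.exp (-(r*s))))
        (by
          intro s hs
          rw [hicc] at hs
          simp only
          rw [hcbar s hs, hzbar s hs, hΨdef]
          ring)]
      rw [intervalIntegral.integral_sub h1 h2,
        show (∫ s in (0:ℝ)..T, B * (p * Ψ s * Real.exp (-(r*s)))) = B * K by
          rw [intervalIntegral.integral_const_mul, ← hKdef],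
        ← hWIdef]
    have hB2 : B = Real.exp (r*T) * (a₀ + (WI - B * K)) := by
      conv_lhs => rw [hBdef]
      simp only [stateA]
      rw [hint]
    linear_combination hB2
  -- the integrand for A, rewritten via the consumption rule
  have hcongrA : (∫ s in (0:ℝ)..T,
      (w (stateX x₀ z s) - p * c s - ξ * (z s)^2) * Real.exp (-(r*s)))
      = ∫ s in (0:ℝ)..T,
        ((w (stateX x₀ z s) - ξ * (z s)^2) * Real.exp (-(r*s))
          - A * (p * Ψ s * Real.exp (-(r*s)))) := by
    apply intervalIntegral.integral_congr
    intro s hs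
    rw [hicc] at hs
    simp only
    rw [hc s hs, hΨdef]
    ring
  have h2A : IntervalIntegrable (fun s => A * (p * Ψ s * Real.exp (-(r*s))))
      MeasureTheory.volume 0 T := (continuous_const.mul hKcont).intervalIntegrable _ _
  by_cases hgI : IntervalIntegrable
      (fun s => (w (stateX x₀ z s) - ξ * (z s)^2) * Real.exp (-(r*s)))
      MeasureTheory.volume 0 T
  · -- integrable case : algebraic comparison
    have hAeq : A * (1 + Real.exp (r*T) * K)
        = Real.exp (r*T) * (a₀ + ∫ s in (0:ℝ)..T,
            (w (stateX x₀ z s) - ξ * (z s)^2) * Real.exp (-(r*s))) := by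
      have hA2 : A = Real.exp (r*T) * (a₀ + ((∫ s in (0:ℝ)..T,
          (w (stateX x₀ z s) - ξ * (z s)^2) * Real.exp (-(r*s))) - A * K)) := by
        conv_lhs => rw [hAdef]
        simp only [stateA]
        rw [hcongrA, intervalIntegral.integral_sub hgI h2A,
          intervalIntegral.integral_const_mul, ← hKdef]
      linear_combination hA2
    have hGle : (∫ s in (0:ℝ)..T,
        (w (stateX x₀ z s) - ξ * (z s)^2) * Real.exp (-(r*s))) ≤ WI := by
      rw [hWIdef]
      apply intervalIntegral.integral_mono_on h0T hgI
        (hWIcont.intervalIntegrable _ _)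
      intro s _
      have h1 : w (stateX x₀ z s) - ξ * (z s)^2 ≤ W := by
        nlinarith [hwW (stateX x₀ z s), sq_nonneg (z s), hξ.le]
      exact mul_le_mul_of_nonneg_right h1 (Real.exp_pos _).le
    have h3 : A * (1 + Real.exp (r*T) * K) ≤ B * (1 + Real.exp (r*T) * K) := by
      rw [hAeq, hBeq]
      have := mul_le_mul_of_nonneg_left (add_le_add_left hGle a₀) hE.le
      linarith
    exact le_of_mul_le_mul_right h3 hden
  · -- non-integrable case : contradiction with optimality
    exfalso
    have hAval : A = Real.exp (r*T) * a₀ := by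
      have hnot : ¬ IntervalIntegrable
          (fun s => (w (stateX x₀ z s) - ξ * (z s)^2) * Real.exp (-(r*s))
            - A * (p * Ψ s * Real.exp (-(r*s)))) MeasureTheory.volume 0 T := by
        intro h
        apply hgI
        have h3 := h.add h2A
        have heq : (fun s => ((w (stateX x₀ z s) - ξ * (z s)^2) * Real.exp (-(r*s))
            - A * (p * Ψ s * Real.exp (-(r*s)))) + A * (p * Ψ s * Real.exp (-(r*s))))
            = fun s => (w (stateX x₀ z s) - ξ * (z s)^2) * Real.exp (-(r*s)) :=
          funext fun s => by ring
        rwa [heq] at h3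
      rw [hAdef]
      simp only [stateA]
      rw [hcongrA, intervalIntegral.integral_undef hnot, add_zero]
    have hApos : 0 < A := by rw [hAval]; exact mul_pos hE ha₀
    have hwx₀ : 0 < w x₀ := hw.2.2.1 x₀ hx₀
    have hεpos : 0 < w x₀ / p := div_pos hwx₀ hp
    have hx' : ∀ s : ℝ, stateX x₀ (fun _ => (0:ℝ)) s = x₀ := by
      intro s; simp [stateX]
    have hA' : stateA r p ξ a₀ x₀ w (fun _ => w x₀ / p) (fun _ => (0:ℝ)) T
        = Real.exp (r*T) * a₀ := by
      simp only [stateA]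
      rw [intervalIntegral.integral_congr (g := fun _ => (0:ℝ))
        (by
          intro s _
          simp only
          rw [hx' s]
          have hpp : p * (w x₀ / p) = w x₀ := by field_simp
          rw [hpp]
          ring)]
      simp
    have hadm : Admissible' r p ξ T a₀ x₀ w (fun _ => w x₀ / p) (fun _ => (0:ℝ)) :=
      ⟨measurable_const, measurable_const, fun t _ => hεpos.le,
        by rw [hA']; exact (mul_pos hE ha₀).le⟩
    have hle := hopt.2 _ _ hadm
    -- the objective integrand for (c, z) is not interval integrable
    have hnotu : ¬ IntervalIntegrable
        (fun t => Real.exp (-(ρ*t)) * ((c t) ^ (1-θ) / (1-θ) - η * (z t)^2))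
        MeasureTheory.volume 0 T := by
      intro hu
      apply hgI
      have hmz : Measurable z := hopt.1.2.1
      have hu₁c : Continuous (fun t : ℝ => Real.exp (-(ρ*t)) * ((Ψ t * A) ^ (1-θ) / (1-θ))) := by
        have hb : Continuous fun t : ℝ => Ψ t * A := hΨcont.mul continuous_const
        have hb2 : Continuous fun t : ℝ => (Ψ t * A) ^ (1-θ) :=
          hb.rpow_const (fun t => Or.inr (by linarith))
        exact (Real.continuous_exp.comp (by fun_prop)).mul (hb2.div_const _)
      have hu₁ : IntervalIntegrable
          (fun t => Real.exp (-(ρ*t)) * ((c t) ^ (1-θ) / (1-θ)))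
          MeasureTheory.volume 0 T := by
        apply intervalIntegrable_congr_Icc h0T (hu₁c.intervalIntegrable 0 T)
        intro t ht
        simp only
        rw [hc t ht, hΨdef]
      have hv : IntervalIntegrable (fun t => Real.exp (-(ρ*t)) * (z t)^2)
          MeasureTheory.volume 0 T := by
        have h3 := hu₁.sub hu
        have heq : (fun t => (Real.exp (-(ρ*t)) * ((c t) ^ (1-θ) / (1-θ)))
            - (Real.exp (-(ρ*t)) * ((c t) ^ (1-θ) / (1-θ) - η * (z t)^2)))
            = fun t => η * (Real.exp (-(ρ*t)) * (z t)^2) := funext fun t => by ring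
        rw [heq] at h3
        have h4 := h3.const_mul η⁻¹
        have heq2 : (fun t => η⁻¹ * (η * (Real.exp (-(ρ*t)) * (z t)^2)))
            = fun t => Real.exp (-(ρ*t)) * (z t)^2 := funext fun t => by
          rw [← mul_assoc, inv_mul_cancel₀ hη.ne', one_mul]
        rwa [heq2] at h4
      have hv' : MeasureTheory.IntegrableOn (fun t => Real.exp (-(ρ*t)) * (z t)^2)
          (Set.Ioc 0 T) MeasureTheory.volume :=
        (intervalIntegrable_iff_integrableOn_Ioc_of_le h0T).mp hv
      have hz2 : MeasureTheory.IntegrableOn (fun t => (z t)^2)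
          (Set.Ioc 0 T) MeasureTheory.volume := by
        apply MeasureTheory.Integrable.mono'
          (g := fun t => Real.exp (ρ*T) * (Real.exp (-(ρ*t)) * (z t)^2))
          (hv'.const_mul _)
          ((hmz.pow_const 2).aestronglyMeasurable)
        refine (MeasureTheory.ae_restrict_iff' measurableSet_Ioc).mpr
          (MeasureTheory.ae_of_all _ fun t ht => ?_)
        rw [Real.norm_eq_abs, abs_of_nonneg (sq_nonneg _)]
        have h1 : 1 ≤ Real.exp (ρ*T) * Real.exp (-(ρ*t)) := by
          rw [← Real.exp_add]
          apply Real.one_le_exp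
          nlinarith [ht.2, hρ]
        nlinarith [sq_nonneg (z t)]
      have hz1 : MeasureTheory.IntegrableOn z (Set.Ioc 0 T) MeasureTheory.volume := by
        apply MeasureTheory.Integrable.mono' (g := fun t => 1 + (z t)^2)
          (show MeasureTheory.IntegrableOn (fun t => 1 + (z t)^2) (Set.Ioc 0 T) MeasureTheory.volume from
            (MeasureTheory.integrableOn_const (C := (1:ℝ)) measure_Ioc_lt_top.ne enorm_ne_top).add hz2)
          hmz.aestronglyMeasurable
        refine (MeasureTheory.ae_restrict_iff' measurableSet_Ioc).mpr
          (MeasureTheory.ae_of_all _ fun t _ => ?_)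
        rw [Real.norm_eq_abs]
        nlinarith [sq_nonneg (|z t| - 1), abs_nonneg (z t), sq_abs (z t)]
      have hzIcc : MeasureTheory.IntegrableOn z (Set.Icc 0 T) MeasureTheory.volume :=
        (integrableOn_Icc_iff_integrableOn_Ioc).mpr hz1
      have hxcont : ContinuousOn (fun s => stateX x₀ z s) (Set.Icc 0 T) := by
        simp only [stateX]
        apply ContinuousOn.add continuousOn_const
        have := intervalIntegral.continuousOn_primitive_interval
          (a := 0) (b := T) (μ := MeasureTheory.volume) (f := z) (by rwa [hicc])
        rwa [hicc] at this
      have hwxm : MeasureTheory.AEStronglyMeasurable (fun s => w (stateX x₀ z s))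
          (MeasureTheory.volume.restrict (Set.Ioc 0 T)) := by
        have hcont : ContinuousOn (fun s => w (stateX x₀ z s)) (Set.Icc 0 T) :=
          (hw.1.continuous.comp_continuousOn hxcont)
        exact ((hcont.mono Set.Ioc_subset_Icc_self).aestronglyMeasurable measurableSet_Ioc)
      obtain ⟨M, hM⟩ := hw.2.1
      have hM0 : 0 ≤ M := (abs_nonneg _).trans (hM 0)
      have hwint : MeasureTheory.IntegrableOn
          (fun s => w (stateX x₀ z s) * Real.exp (-(r*s))) (Set.Ioc 0 T)
          MeasureTheory.volume := by
        refine MeasureTheory.Integrable.mono' (g := fun _ => M)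
          (MeasureTheory.integrableOn_const measure_Ioc_lt_top.ne) ?_ ?_
        · exact hwxm.mul ((Real.continuous_exp.comp (by fun_prop)).aestronglyMeasurable)
        refine (MeasureTheory.ae_restrict_iff' measurableSet_Ioc).mpr
          (MeasureTheory.ae_of_all _ fun s hs => ?_)
        rw [Real.norm_eq_abs, abs_mul, abs_of_nonneg (Real.exp_pos _).le]
        have he1 : Real.exp (-(r*s)) ≤ 1 := by
          rw [Real.exp_le_one_iff]
          nlinarith [hs.1, hr]
        calc |w (stateX x₀ z s)| * Real.exp (-(r*s)) ≤ M * 1 :=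
              mul_le_mul (hM _) he1 (Real.exp_pos _).le hM0
          _ = M := mul_one M
      have hz2e : MeasureTheory.IntegrableOn
          (fun s => ξ * (z s)^2 * Real.exp (-(r*s))) (Set.Ioc 0 T)
          MeasureTheory.volume := by
        refine MeasureTheory.Integrable.mono' (g := fun s => ξ * (z s)^2)
          (hz2.const_mul ξ) ?_ ?_
        · exact (by fun_prop :
            Measurable fun s => ξ * (z s)^2 * Real.exp (-(r*s))).aestronglyMeasurable
        refine (MeasureTheory.ae_restrict_iff' measurableSet_Ioc).mpr
          (MeasureTheory.ae_of_all _ fun s hs => ?_)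
        rw [Real.norm_eq_abs]
        have he1 : Real.exp (-(r*s)) ≤ 1 := by
          rw [Real.exp_le_one_iff]
          nlinarith [hs.1, hr]
        rw [abs_of_nonneg (mul_nonneg (mul_nonneg hξ.le (sq_nonneg _)) (Real.exp_pos _).le)]
        exact mul_le_of_le_one_right (mul_nonneg hξ.le (sq_nonneg _)) he1
      have hcomb : MeasureTheory.IntegrableOn
          (fun s => (w (stateX x₀ z s) - ξ * (z s)^2) * Real.exp (-(r*s)))
          (Set.Ioc 0 T) MeasureTheory.volume := by
        exact MeasureTheory.IntegrableOn.congr_fun (hwint.sub hz2e)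
          (fun s _ => by simp only [Pi.sub_apply]; ring) measurableSet_Ioc
      exact (intervalIntegrable_iff_integrableOn_Ioc_of_le h0T).mpr hcomb
    -- compare the objectives
    simp only [obj] at hle
    rw [intervalIntegral.integral_undef hnotu, hA', ← hAdef, hAval] at hle
    have hP : 0 < ∫ t in (0:ℝ)..T,
        Real.exp (-(ρ*t)) * ((w x₀ / p) ^ (1-θ) / (1-θ) - η * (0:ℝ)^2) := by
      apply intervalIntegral.intervalIntegral_pos_of_pos _ _ hT
      · apply Continuous.intervalIntegrable
        exact (Real.continuous_exp.comp (by fun_prop)).mul continuous_const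
      · intro t
        have h6 : 0 < (w x₀ / p) ^ (1-θ) := Real.rpow_pos_of_pos hεpos _
        have h7 : 0 < (1:ℝ) - θ := by linarith
        have h8 : Real.exp (-(ρ*t)) * ((w x₀ / p) ^ (1-θ) / (1-θ) - η * (0:ℝ)^2)
            = Real.exp (-(ρ*t)) * ((w x₀ / p) ^ (1-θ) / (1-θ)) := by ring
        rw [h8]
        exact mul_pos (Real.exp_pos _) (div_pos h6 h7)
    linarith [hP, hle]
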